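/- Let H(W) be a finite connected network whose vertex set is partitioned into disjoint sets A and B, and suppose there exist u ∈ A, v ∈ B, and ε > 0 with: (1) R_eff(u,v) ≥ ε, and (2) R_eff(u,x) ≤ ε/12 for all x ∈ A and R_eff(v,x) ≤ ε/12 for all x ∈ B. Then R_eff(A,B) ≥ ε/6. -/

import Mathlib

/-- Dirichlet energy of a function on a network. -/
noncomputable def energy {V : Type*} [Fintype V] (c : V → V → ℝ) (f : V → ℝ) : ℝ :=
  (1 / 2) * ∑ x, ∑ y, c x y * (f x - f y) ^ 2

/-- A network is connected if only constant functions have zero energy. -/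
def Connected {V : Type*} [Fintype V] (c : V → V → ℝ) : Prop :=
  ∀ f : V → ℝ, energy c f = 0 → ∀ x y, f x = f y

/-- Effective conductance between two disjoint vertex sets, via the Dirichlet principle. -/
noncomputable def effCond {V : Type*} [Fintype V] (c : V → V → ℝ) (A B : Set V) : ℝ :=
  sInf {e | ∃ f : V → ℝ, (∀ a ∈ A, f a = 1) ∧ (∀ b ∈ B, f b = 0) ∧ e = energy c f}

/-- Effective resistance between two vertex sets. -/
noncomputable def effRes {V : Type*} [Fintype V] (c : V → V → ℝ) (A B : Set V) : ℝ :=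
  1 / effCond c A B

section Aux
variable {V : Type*} [Fintype V]

lemma energy_nonneg (c : V → V → ℝ) (hnn : ∀ a b, 0 ≤ c a b) (f : V → ℝ) :
    0 ≤ energy c f := by
  apply mul_nonneg (by norm_num)
  exact Finset.sum_nonneg fun x _ => Finset.sum_nonneg fun y _ =>
    mul_nonneg (hnn x y) (sq_nonneg _)

lemma energy_affine (c : V → V → ℝ) (f : V → ℝ) (k a : ℝ) :
    energy c (fun z => k * (f z - a)) = k ^ 2 * energy c f := by
  unfold energy
  have h : ∀ x y : V, c x y * ((k * (f x - a)) - (k * (f y - a))) ^ 2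
      = k ^ 2 * (c x y * (f x - f y) ^ 2) := fun x y => by ring
  simp_rw [h, ← Finset.mul_sum]
  ring

lemma energy_mono (c : V → V → ℝ) (hnn : ∀ a b, 0 ≤ c a b) (g g' : V → ℝ)
    (h : ∀ a b, (g a - g b) ^ 2 ≤ (g' a - g' b) ^ 2) :
    energy c g ≤ energy c g' := by
  unfold energy
  apply mul_le_mul_of_nonneg_left _ (by norm_num)
  exact Finset.sum_le_sum fun x _ => Finset.sum_le_sum fun y _ =>
    mul_le_mul_of_nonneg_left (h x y) (hnn x y)

lemma clamp_lip (a b : ℝ) : |min 1 (max 0 a) - min 1 (max 0 b)| ≤ |a - b| := by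
  calc |min 1 (max 0 a) - min 1 (max 0 b)|
      ≤ max |(1:ℝ) - 1| |max 0 a - max 0 b| := abs_min_sub_min_le_max _ _ _ _
    _ ≤ |a - b| := by
        apply max_le (by simp [abs_nonneg])
        calc |max 0 a - max 0 b| = |max a 0 - max b 0| := by rw [max_comm 0 a, max_comm 0 b]
          _ ≤ |a - b| := abs_max_sub_max_le_abs a b 0

/-- positive lower bound for energies of functions separating two points -/
lemma exists_pos_lb (c : V → V → ℝ) (hnn : ∀ a b, 0 ≤ c a b) (hconn : Connected c)
    (u x : V) (hux : u ≠ x) :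
    ∃ α > 0, ∀ f : V → ℝ, f u = 1 → f x = 0 → α ≤ energy c f := by
  classical
  set S : Set (V → ℝ) := Metric.sphere 0 1 ∩ {f | f x = 0} with hS
  have hcomp : IsCompact S :=
    (isCompact_sphere (0 : V → ℝ) 1).inter_right
      (isClosed_eq (continuous_apply x) continuous_const)
  have hne : S.Nonempty := by
    refine ⟨Pi.single u 1, ?_, ?_⟩
    · simp [mem_sphere_zero_iff_norm, Pi.norm_single]
    · simp [Pi.single_eq_of_ne (Ne.symm hux)]
  have hcont : Continuous fun f : V → ℝ => energy c f := by
    unfold energy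
    continuity
  obtain ⟨f₀, hf₀S, hmin⟩ := hcomp.exists_isMinOn hne hcont.continuousOn
  refine ⟨energy c f₀, ?_, ?_⟩
  · rcases lt_or_eq_of_le (energy_nonneg c hnn f₀) with h | h
    · exact h
    · exfalso
      have hzero : f₀ = 0 := funext fun z => by simp only [Pi.zero_apply]; rw [hconn f₀ h.symm z x]; exact hf₀S.2
      have h1 : ‖f₀‖ = 1 := mem_sphere_zero_iff_norm.mp hf₀S.1
      rw [hzero] at h1
      simp at h1
  · intro f hfu hfx
    have hnorm : (1:ℝ) ≤ ‖f‖ := by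
      have := norm_le_pi_norm f u
      rw [hfu] at this; simpa using this
    have hnpos : (0:ℝ) < ‖f‖ := lt_of_lt_of_le one_pos hnorm
    set g : V → ℝ := fun z => ‖f‖⁻¹ * (f z - 0) with hg
    have hgS : g ∈ S := by
      constructor
      · rw [mem_sphere_zero_iff_norm]
        have : g = ‖f‖⁻¹ • f := by funext z; simp [hg]
        rw [this, norm_smul]
        simp [abs_of_pos (inv_pos.mpr hnpos), inv_mul_cancel₀ (ne_of_gt hnpos)]
      · simp [hg, hfx]
    have h1 : energy c f₀ ≤ energy c g := hmin hgS
    have h2 : energy c g = (‖f‖⁻¹) ^ 2 * energy c f := energy_affine c f ‖f‖⁻¹ 0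
    have h3 : (‖f‖⁻¹) ^ 2 ≤ 1 := by
      rw [inv_pow]
      apply inv_le_one_of_one_le₀
      nlinarith
    nlinarith [energy_nonneg c hnn f]

end Aux

/-- If a finite connected network is partitioned into `A` and `B`, with `u ∈ A`, `v ∈ B`,
`R_eff(u,v) ≥ ε`, `R_eff(u,x) ≤ ε/12` for all `x ∈ A`, and `R_eff(v,x) ≤ ε/12` for all
`x ∈ B`, then `R_eff(A,B) ≥ ε/6`. -/
theorem effRes_sets_lower_bound {V : Type*} [Fintype V]
    (c : V → V → ℝ) (hsymm : ∀ a b, c a b = c b a) (hnn : ∀ a b, 0 ≤ c a b)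
    (hconn : Connected c)
    (A B : Set V) (hdisj : Disjoint A B) (hcover : A ∪ B = Set.univ)
    (u v : V) (hu : u ∈ A) (hv : v ∈ B)
    (ε : ℝ) (hε : 0 < ε)
    (huv : ε ≤ effRes c {u} {v})
    (hA : ∀ x ∈ A, effRes c {u} {x} ≤ ε / 12)
    (hB : ∀ x ∈ B, effRes c {v} {x} ≤ ε / 12) :
    ε / 6 ≤ effRes c A B := by
  classical
  have bdd : ∀ A' B' : Set V, BddBelow {e | ∃ f : V → ℝ,
      (∀ a ∈ A', f a = 1) ∧ (∀ b ∈ B', f b = 0) ∧ e = energy c f} :=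
    fun A' B' => ⟨0, by rintro e ⟨f, -, -, rfl⟩; exact energy_nonneg c hnn f⟩
  have huvne : u ≠ v := fun h => (Set.disjoint_left.mp hdisj hu) (h ▸ hv)
  -- key estimate from the pointwise resistance bounds
  have key : ∀ w x : V, w ≠ x → effRes c {w} {x} ≤ ε / 12 →
      ∀ f : V → ℝ, 12 / ε * (f w - f x) ^ 2 ≤ energy c f := by
    intro w x hwx hres f
    obtain ⟨α, hα, hlb⟩ := exists_pos_lb c hnn hconn w x hwx
    set Cwx := effCond c {w} {x} with hC
    have hne : {e | ∃ f : V → ℝ, (∀ a ∈ ({w} : Set V), f a = 1) ∧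
        (∀ b ∈ ({x} : Set V), f b = 0) ∧ e = energy c f}.Nonempty := by
      refine ⟨energy c (fun z => if z = w then 1 else 0), fun z => if z = w then 1 else 0,
        ?_, ?_, rfl⟩
      · intro a ha; simp [Set.mem_singleton_iff.mp ha]
      · intro b hb; simp [Set.mem_singleton_iff.mp hb, Ne.symm hwx]
    have hCge : α ≤ Cwx := by
      apply le_csInf hne
      rintro e ⟨g, h1, h0, rfl⟩
      exact hlb g (h1 w rfl) (h0 x rfl)
    have hCpos : 0 < Cwx := lt_of_lt_of_le hα hCge
    have hres' : 1 / Cwx ≤ ε / 12 := hres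
    have h12 : 12 / ε ≤ Cwx := by
      rw [div_le_div_iff₀ hCpos (by norm_num : (0:ℝ) < 12)] at hres'
      rw [div_le_iff₀ hε]
      nlinarith
    by_cases hd : f w = f x
    · rw [hd]
      simp only [sub_self, ne_eq, OfNat.ofNat_ne_zero, not_false_eq_true, zero_pow, mul_zero]
      exact energy_nonneg c hnn f
    · set d := f w - f x with hdd
      have hdne : d ≠ 0 := sub_ne_zero.mpr hd
      have hd2 : (0:ℝ) < d ^ 2 := by positivity
      set g : V → ℝ := fun z => (1 / d) * (f z - f x) with hg
      have hmem : energy c g ∈ {e | ∃ f : V → ℝ, (∀ a ∈ ({w} : Set V), f a = 1) ∧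
          (∀ b ∈ ({x} : Set V), f b = 0) ∧ e = energy c f} := by
        refine ⟨g, ?_, ?_, rfl⟩
        · intro a ha
          rw [Set.mem_singleton_iff.mp ha]
          simp only [hg, ← hdd]
          field_simp
        · intro b hb
          rw [Set.mem_singleton_iff.mp hb]
          simp [hg]
      have hle : Cwx ≤ energy c g := csInf_le (bdd _ _) hmem
      have heg : energy c g = (1 / d) ^ 2 * energy c f := energy_affine c f (1 / d) (f x)
      have h1 : 12 / ε ≤ (1 / d) ^ 2 * energy c f := by rw [← heg]; linarith
      have h2 : 12 / ε * d ^ 2 ≤ (1 / d) ^ 2 * energy c f * d ^ 2 :=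
        mul_le_mul_of_nonneg_right h1 (le_of_lt hd2)
      have h3 : (1 / d) ^ 2 * energy c f * d ^ 2 = energy c f := by field_simp
      linarith
  -- positivity constant for the pair (u, v)
  obtain ⟨α, hα, hlb⟩ := exists_pos_lb c hnn hconn u v huvne
  -- the admissible set for (A, B) and for ({u},{v})
  have hneuv : {e | ∃ f : V → ℝ, (∀ a ∈ ({u} : Set V), f a = 1) ∧
      (∀ b ∈ ({v} : Set V), f b = 0) ∧ e = energy c f}.Nonempty := by
    refine ⟨energy c (fun z => if z = u then 1 else 0), fun z => if z = u then 1 else 0,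
      ?_, ?_, rfl⟩
    · intro a ha; simp [Set.mem_singleton_iff.mp ha]
    · intro b hb; simp [Set.mem_singleton_iff.mp hb, Ne.symm huvne]
  set Cuv := effCond c {u} {v} with hCuv
  have hCuvge : α ≤ Cuv := by
    apply le_csInf hneuv
    rintro e ⟨g, h1, h0, rfl⟩
    exact hlb g (h1 u rfl) (h0 v rfl)
  have hCuvpos : 0 < Cuv := lt_of_lt_of_le hα hCuvge
  have huv' : ε ≤ 1 / Cuv := huv
  have hCuvle : Cuv ≤ 1 / ε := by
    rw [le_div_iff₀ hε]
    rw [le_div_iff₀ hCuvpos] at huv'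
    nlinarith
  -- pick a near-optimal f for ({u},{v})
  obtain ⟨e, ⟨f, hf1, hf0, rfl⟩, hlt⟩ :=
    Real.lt_sInf_add_pos hneuv (show (0:ℝ) < 23 / (2500 * ε) by positivity)
  have hfu : f u = 1 := hf1 u rfl
  have hfv : f v = 0 := hf0 v rfl
  have hE : energy c f ≤ 2523 / (2500 * ε) := by
    have : sInf {e | ∃ f : V → ℝ, (∀ a ∈ ({u} : Set V), f a = 1) ∧
        (∀ b ∈ ({v} : Set V), f b = 0) ∧ e = energy c f} = Cuv := rfl
    rw [this] at hlt
    have h1 : Cuv ≤ 2500 / (2500 * ε) := by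
      have he : (2500:ℝ) / (2500 * ε) = 1 / ε := by field_simp
      rw [he]; exact hCuvle
    have h2 : (2500:ℝ) / (2500 * ε) + 23 / (2500 * ε) = 2523 / (2500 * ε) := by
      rw [← add_div]; norm_num
    linarith
  -- f is close to 1 on A and close to 0 on B
  have hfA : ∀ x ∈ A, 71 / 100 ≤ f x := by
    intro x hx
    by_cases hxu : x = u
    · rw [hxu, hfu]; norm_num
    · have hk := key u x (fun h => hxu h.symm) (hA x hx) f
      rw [hfu] at hk
      have hsq : (1 - f x) ^ 2 ≤ 841 / 10000 := by
        have h4 := mul_le_mul_of_nonneg_left hk (le_of_lt hε)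
        have h5 : ε * (12 / ε * (1 - f x) ^ 2) = 12 * (1 - f x) ^ 2 := by field_simp <;> ring
        have h6 : ε * (2523 / (2500 * ε)) = 2523 / 2500 := by field_simp <;> ring
        have h7 := mul_le_mul_of_nonneg_left hE (le_of_lt hε)
        rw [h5] at h4
        rw [h6] at h7
        nlinarith
      nlinarith [sq_nonneg (f x - 71 / 100)]
  have hfB : ∀ x ∈ B, f x ≤ 29 / 100 := by
    intro x hx
    by_cases hxv : x = v
    · rw [hxv, hfv]; norm_num
    · have hk := key v x (fun h => hxv h.symm) (hB x hx) f
      rw [hfv] at hk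
      have hsq : (f x) ^ 2 ≤ 841 / 10000 := by
        have h4 := mul_le_mul_of_nonneg_left hk (le_of_lt hε)
        have h5 : ε * (12 / ε * (0 - f x) ^ 2) = 12 * (f x) ^ 2 := by field_simp <;> ring
        have h6 : ε * (2523 / (2500 * ε)) = 2523 / 2500 := by field_simp <;> ring
        have h7 := mul_le_mul_of_nonneg_left hE (le_of_lt hε)
        rw [h5] at h4
        rw [h6] at h7
        nlinarith
      nlinarith [sq_nonneg (f x - 29 / 100)]
  -- the clamped test function
  set h : V → ℝ := fun z => min 1 (max 0 ((50 / 21) * (f z - 29 / 100))) with hh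
  have hA1 : ∀ a ∈ A, h a = 1 := by
    intro a ha
    have h1 : (1:ℝ) ≤ (50 / 21) * (f a - 29 / 100) := by
      have := hfA a ha; nlinarith
    simp only [hh]
    rw [min_eq_left (le_trans h1 (le_max_right _ _))]
  have hB0 : ∀ b ∈ B, h b = 0 := by
    intro b hb
    have h1 : (50 / 21) * (f b - 29 / 100) ≤ 0 := by
      have := hfB b hb; nlinarith
    simp only [hh]
    rw [max_eq_left h1, min_eq_right zero_le_one]
  have hEh : energy c h ≤ (50 / 21 : ℝ) ^ 2 * energy c f := by
    rw [← energy_affine c f (50 / 21) (29 / 100)]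
    apply energy_mono c hnn
    intro a b
    calc (h a - h b) ^ 2 = |h a - h b| ^ 2 := (sq_abs _).symm
      _ ≤ |(50 / 21) * (f a - 29 / 100) - (50 / 21) * (f b - 29 / 100)| ^ 2 :=
          pow_le_pow_left₀ (abs_nonneg _) (clamp_lip _ _) 2
      _ = ((50 / 21) * (f a - 29 / 100) - (50 / 21) * (f b - 29 / 100)) ^ 2 := sq_abs _
  set CAB := effCond c A B with hCAB
  have hmemAB : energy c h ∈ {e | ∃ f : V → ℝ, (∀ a ∈ A, f a = 1) ∧
      (∀ b ∈ B, f b = 0) ∧ e = energy c f} := ⟨h, hA1, hB0, rfl⟩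
  have hCABle : CAB ≤ energy c h := csInf_le (bdd A B) hmemAB
  have hCABpos : 0 < CAB := by
    apply lt_of_lt_of_le hα
    apply le_csInf ⟨energy c h, hmemAB⟩
    rintro e ⟨g, h1, h0, rfl⟩
    exact hlb g (h1 u hu) (h0 v hv)
  have hCAB6 : CAB ≤ 6 / ε := by
    have h1 : (50 / 21 : ℝ) ^ 2 * energy c f ≤ (50 / 21 : ℝ) ^ 2 * (2523 / (2500 * ε)) :=
      mul_le_mul_of_nonneg_left hE (by positivity)
    have h2 : (50 / 21 : ℝ) ^ 2 * (2523 / (2500 * ε)) ≤ 6 / ε := by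
      have he : (50 / 21 : ℝ) ^ 2 * (2523 / (2500 * ε)) = (2523 / 441) / ε := by
        field_simp; ring
      rw [he]
      gcongr <;> norm_num
    linarith
  show ε / 6 ≤ 1 / CAB
  have h1 : 1 / (6 / ε) ≤ 1 / CAB := one_div_le_one_div_of_le hCABpos hCAB6
  have h2 : 1 / (6 / ε) = ε / 6 := one_div_div _ _
  linarith
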